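/- arXiv:2112.08499 — 5 statements merged into one kernel-verified Lean document; each statement's English description precedes it below -/
import Mathlib

section
/- Correctness of the gate-by-gate sampling algorithm: Let U = U_m ⋯ U_2 U_1 be an n-qubit quantum circuit where each gate U_t is a unitary acting trivially outside its support supp(U_t) ⊆ {1,…,n}, and set A_t := {1,…,n} \setminus supp(U_t). Define the output distributions P_t(x) = |⟨x|U_t ⋯ U_1|0^n⟩|² for t = 0,1,…,m (so P_0 = δ_{0^n}). For each t, let M_t be any stochastic matrix on {0,1}^n (rows indexed by the current string x, columns by the new string y) satisfying M_t(y|x) = [y_{A_t} = x_{A_t}] · P_t(y)/P_t(x_{A_t}) whenever P_t(x_{A_t}) > 0, where P_t(x_{A_t}) := Σ_{w : w_{A_t} = x_{A_t}} P_t(w). Then the distribution obtained by applying M_1, M_2, …, M_m in sequence to the point distribution δ_{0^n} equals P_m, i.e., M_m ⋯ M_1 δ_{0^n} = P_m. -/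
/-- Restriction of a bit string `x : Fin n → Bool` to the positions in `A`. -/
def restrictTo {n : ℕ} (A : Finset (Fin n)) (x : Fin n → Bool) :
    {i : Fin n // i ∈ A} → Bool :=
  fun i => x i.val

def combineBits {n : ℕ} (A : Finset (Fin n)) (s : {i : Fin n // i ∈ A} → Bool)
    (a : {i : Fin n // i ∈ Aᶜ} → Bool) : Fin n → Bool :=
  fun i => if h : i ∈ A then s ⟨i, h⟩ else a ⟨i, Finset.mem_compl.mpr h⟩

@[simp] lemma restrictTo_combineBits {n : ℕ} (A : Finset (Fin n)) (s) (a) :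
    restrictTo A (combineBits A s a) = s := by
  funext i; simp [restrictTo, combineBits, i.2]

@[simp] lemma restrictTo_compl_combineBits {n : ℕ} (A : Finset (Fin n)) (s) (a) :
    restrictTo Aᶜ (combineBits A s a) = a := by
  funext i
  have h : ¬ (i : Fin n) ∈ A := by
    exact Finset.mem_compl.mp i.2
  simp [restrictTo, combineBits, h]

def splitEquiv {n : ℕ} (A : Finset (Fin n)) :
    (Fin n → Bool) ≃ ({i : Fin n // i ∈ A} → Bool) × ({i : Fin n // i ∈ Aᶜ} → Bool) where
  toFun x := (restrictTo A x, restrictTo Aᶜ x)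
  invFun p := combineBits A p.1 p.2
  left_inv x := by
    funext i; by_cases h : i ∈ A <;> simp [combineBits, restrictTo, h]
  right_inv p := by
    cases p with
    | mk s a => simp

lemma sum_restrict_eq {n : ℕ} {β : Type*} [AddCommMonoid β] (A : Finset (Fin n))
    (f : (Fin n → Bool) → β) (z : {i : Fin n // i ∈ Aᶜ} → Bool) :
    (∑ w : Fin n → Bool, if restrictTo Aᶜ w = z then f w else 0)
      = ∑ s : {i : Fin n // i ∈ A} → Bool, f (combineBits A s z) := by
  rw [← Equiv.sum_comp (splitEquiv A).symm
      (fun w => if restrictTo Aᶜ w = z then f w else 0)]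
  rw [Fintype.sum_prod_type]
  have : ∀ s : {i : Fin n // i ∈ A} → Bool,
      (∑ a : {i : Fin n // i ∈ Aᶜ} → Bool,
        (fun w => if restrictTo Aᶜ w = z then f w else 0) ((splitEquiv A).symm (s, a)))
      = f (combineBits A s z) := by
    intro s
    have h1 : ∀ a, (splitEquiv A).symm (s, a) = combineBits A s a := fun a => rfl
    simp only [h1, restrictTo_compl_combineBits]
    simp
  exact Finset.sum_congr rfl fun s _ => this s

lemma sum_norm_sq_mulVec {ι : Type*} [Fintype ι] [DecidableEq ι]
    (V : Matrix ι ι ℂ) (hV : V ∈ Matrix.unitaryGroup ι ℂ) (φ : ι → ℂ) :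
    ∑ s, ‖V.mulVec φ s‖ ^ 2 = ∑ s, ‖φ s‖ ^ 2 := by
  have key : ∀ v : ι → ℂ, ((∑ s, ‖v s‖ ^ 2 : ℝ) : ℂ) = dotProduct (star v) v := by
    intro v
    push_cast
    rw [dotProduct]
    refine Finset.sum_congr rfl fun s _ => ?_
    simp [Pi.star_apply, RCLike.conj_mul]
  have h1 : dotProduct (star (V.mulVec φ)) (V.mulVec φ)
      = dotProduct (star φ) φ := by
    rw [Matrix.star_mulVec, Matrix.dotProduct_mulVec, Matrix.vecMul_vecMul]
    have h2 : V.conjTranspose * V = 1 := hV.1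
    rw [h2, Matrix.vecMul_one]
  have h3 := (key (V.mulVec φ)).trans (h1.trans (key φ).symm)
  exact_mod_cast h3

lemma marginal_pres {n : ℕ} (A : Finset (Fin n))
    (V : Matrix ({i : Fin n // i ∈ A} → Bool) ({i : Fin n // i ∈ A} → Bool) ℂ)
    (hV : V ∈ Matrix.unitaryGroup ({i : Fin n // i ∈ A} → Bool) ℂ)
    (U : Matrix (Fin n → Bool) (Fin n → Bool) ℂ)
    (hUV : ∀ x y : Fin n → Bool,
      U x y = if restrictTo Aᶜ x = restrictTo Aᶜ y
        then V (restrictTo A x) (restrictTo A y) else 0)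
    (ψ : (Fin n → Bool) → ℂ) (z : {i : Fin n // i ∈ Aᶜ} → Bool) :
    (∑ w : Fin n → Bool, if restrictTo Aᶜ w = z then ‖U.mulVec ψ w‖ ^ 2 else 0)
      = ∑ w : Fin n → Bool, if restrictTo Aᶜ w = z then ‖ψ w‖ ^ 2 else 0 := by
  rw [sum_restrict_eq, sum_restrict_eq]
  have hφ : ∀ s, U.mulVec ψ (combineBits A s z)
      = V.mulVec (fun s' => ψ (combineBits A s' z)) s := by
    intro s
    show (∑ y, U (combineBits A s z) y * ψ y) = ∑ s', V s s' * ψ (combineBits A s' z)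
    have h1 : (∑ y, U (combineBits A s z) y * ψ y)
        = ∑ y, (if restrictTo Aᶜ y = z then V s (restrictTo A y) * ψ y else 0) := by
      refine Finset.sum_congr rfl fun y _ => ?_
      rw [hUV]
      simp only [restrictTo_compl_combineBits, restrictTo_combineBits]
      by_cases h : restrictTo Aᶜ y = z
      · simp [h]
      · simp [h, Ne.symm h]
    rw [h1, sum_restrict_eq A (fun y => V s (restrictTo A y) * ψ y) z]
    simp
  simp only [hφ]
  exact sum_norm_sq_mulVec V hV _

lemma step_lemma {n : ℕ} (A : Finset (Fin n)) (P P' : (Fin n → Bool) → ℝ)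
    (hP : ∀ x, 0 ≤ P x) (hP' : ∀ x, 0 ≤ P' x)
    (hmarg : ∀ z, (∑ w : Fin n → Bool, if restrictTo Aᶜ w = z then P w else 0)
      = ∑ w : Fin n → Bool, if restrictTo Aᶜ w = z then P' w else 0)
    (M : (Fin n → Bool) → (Fin n → Bool) → ℝ)
    (hM : ∀ x y : Fin n → Bool,
      0 < (∑ w : Fin n → Bool, if restrictTo Aᶜ w = restrictTo Aᶜ x then P w else 0) →
      M y x = if restrictTo Aᶜ y = restrictTo Aᶜ x
        then P y / (∑ w : Fin n → Bool,
          if restrictTo Aᶜ w = restrictTo Aᶜ x then P w else 0) else 0)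
    (y : Fin n → Bool) :
    ∑ x, M y x * P' x = P y := by
  set S : ({i : Fin n // i ∈ Aᶜ} → Bool) → ℝ :=
    fun z => ∑ w : Fin n → Bool, if restrictTo Aᶜ w = z then P w else 0 with hS
  have hSnn : ∀ z, 0 ≤ S z := by
    intro z
    refine Finset.sum_nonneg fun w _ => ?_
    split
    · exact hP w
    · exact le_rfl
  have hterm : ∀ x, M y x * P' x
      = (if restrictTo Aᶜ y = restrictTo Aᶜ x then P y / S (restrictTo Aᶜ x) else 0)
        * P' x := by
    intro x
    rcases (hSnn (restrictTo Aᶜ x)).lt_or_eq with hpos | hzero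
    · rw [hM x y hpos]
    · have hx0 : P' x = 0 := by
        have hsum : (∑ w : Fin n → Bool,
            if restrictTo Aᶜ w = restrictTo Aᶜ x then P' w else 0) = 0 := by
          rw [← hmarg]; exact hzero.symm
        have hall := (Finset.sum_eq_zero_iff_of_nonneg
          (fun w _ => by split; exacts [hP' w, le_rfl])).mp hsum
        have := hall x (Finset.mem_univ x)
        simpa using this
      simp [hx0]
  rw [Finset.sum_congr rfl fun x _ => hterm x]
  have h2 : ∀ x : Fin n → Bool,
      (if restrictTo Aᶜ y = restrictTo Aᶜ x then P y / S (restrictTo Aᶜ x) else 0) * P' x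
        = (P y / S (restrictTo Aᶜ y)) * (if restrictTo Aᶜ y = restrictTo Aᶜ x then P' x else 0) := by
    intro x
    split_ifs with h
    · rw [← h]
    · simp
  rw [Finset.sum_congr rfl fun x _ => h2 x, ← Finset.mul_sum]
  have h3 : (∑ x : Fin n → Bool, if restrictTo Aᶜ y = restrictTo Aᶜ x then P' x else 0)
      = S (restrictTo Aᶜ y) := by
    rw [show S (restrictTo Aᶜ y)
        = ∑ w : Fin n → Bool, if restrictTo Aᶜ w = restrictTo Aᶜ y then P w else 0 from rfl,
      hmarg]
    refine Finset.sum_congr rfl fun x _ => ?_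
    simp [eq_comm]
  rw [h3]
  rcases (hSnn (restrictTo Aᶜ y)).lt_or_eq with hpos | hzero
  · exact div_mul_cancel₀ (P y) (ne_of_gt hpos)
  · have hy0 : P y = 0 := by
      have hall := (Finset.sum_eq_zero_iff_of_nonneg
        (fun w _ => by split; exacts [hP w, le_rfl])).mp hzero.symm
      have := hall y (Finset.mem_univ y)
      simpa using this
    rw [← hzero, hy0]
    simp

/-- Correctness of the gate-by-gate sampling algorithm.
Let `U = U_{m-1} ⋯ U_1 U_0` be an `n`-qubit circuit in which each gate `U t`
acts trivially outside its support `supp t` (it factors as a unitary on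
`supp t` tensored with the identity on the complement `A_t = (supp t)ᶜ`).
Let `ψ t` be the state after the first `t` gates and `P_t(x) = ‖ψ t x‖²`.
If `M t` is any stochastic matrix (columns indexed by the current string `x`)
that agrees with the conditional distribution
`[y_{A_t} = x_{A_t}] · P_{t+1}(y)/P_{t+1}(x_{A_t})` whenever the marginal
`P_{t+1}(x_{A_t})` is positive, then applying `M 0, …, M (m-1)` in sequence
to the point distribution on `0^n` yields exactly `P_m`. -/
theorem stmt_2 (n m : ℕ)
    (U : Fin m → Matrix (Fin n → Bool) (Fin n → Bool) ℂ)
    (supp : Fin m → Finset (Fin n))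
    (hU : ∀ t, U t ∈ Matrix.unitaryGroup (Fin n → Bool) ℂ)
    (hsupp : ∀ t : Fin m,
      ∃ V ∈ Matrix.unitaryGroup ({i : Fin n // i ∈ supp t} → Bool) ℂ,
        ∀ x y : Fin n → Bool,
          U t x y = if restrictTo (supp t)ᶜ x = restrictTo (supp t)ᶜ y
            then V (restrictTo (supp t) x) (restrictTo (supp t) y) else 0)
    (ψ : ℕ → (Fin n → Bool) → ℂ)
    (hψ0 : ψ 0 = fun x => if x = (fun _ => false) then 1 else 0)
    (hψ : ∀ t : Fin m, ψ (t + 1) = (U t).mulVec (ψ t))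
    (M : Fin m → (Fin n → Bool) → (Fin n → Bool) → ℝ)
    (hMnn : ∀ t x y, 0 ≤ M t y x)
    (hMsum : ∀ t x, ∑ y, M t y x = 1)
    (hM : ∀ t : Fin m, ∀ x y : Fin n → Bool,
      0 < (∑ w : Fin n → Bool,
          if restrictTo (supp t)ᶜ w = restrictTo (supp t)ᶜ x
            then ‖ψ (t + 1) w‖ ^ 2 else 0) →
      M t y x = if restrictTo (supp t)ᶜ y = restrictTo (supp t)ᶜ x
        then ‖ψ (t + 1) y‖ ^ 2 /
          (∑ w : Fin n → Bool,
            if restrictTo (supp t)ᶜ w = restrictTo (supp t)ᶜ x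
              then ‖ψ (t + 1) w‖ ^ 2 else 0)
        else 0)
    (Q : ℕ → (Fin n → Bool) → ℝ)
    (hQ0 : Q 0 = fun x => if x = (fun _ => false) then 1 else 0)
    (hQ : ∀ t : Fin m, Q (t + 1) = fun y => ∑ x, M t y x * Q t x) :
    ∀ x : Fin n → Bool, Q m x = ‖ψ m x‖ ^ 2 := by
  have main : ∀ t, t ≤ m → ∀ x, Q t x = ‖ψ t x‖ ^ 2 := by
    intro t
    induction t with
    | zero =>
      intro _ x
      rw [hQ0, hψ0]
      by_cases h : x = fun _ => false <;> simp [h]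
    | succ t ih =>
      intro ht x
      have htm : t < m := lt_of_lt_of_le (Nat.lt_succ_self t) ht
      set T : Fin m := ⟨t, htm⟩ with hT
      obtain ⟨V, hVu, hVU⟩ := hsupp T
      have hψt : ψ (t + 1) = (U T).mulVec (ψ t) := hψ T
      have hQt : Q (t + 1) = fun y => ∑ x, M T y x * Q t x := hQ T
      have hMT : ∀ x y : Fin n → Bool,
          0 < (∑ w : Fin n → Bool,
              if restrictTo (supp T)ᶜ w = restrictTo (supp T)ᶜ x
                then ‖ψ (t + 1) w‖ ^ 2 else 0) →
          M T y x = if restrictTo (supp T)ᶜ y = restrictTo (supp T)ᶜ x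
            then ‖ψ (t + 1) y‖ ^ 2 /
              (∑ w : Fin n → Bool,
                if restrictTo (supp T)ᶜ w = restrictTo (supp T)ᶜ x
                  then ‖ψ (t + 1) w‖ ^ 2 else 0)
            else 0 := hM T
      have hmarg : ∀ z, (∑ w : Fin n → Bool,
          if restrictTo (supp T)ᶜ w = z then ‖ψ (t + 1) w‖ ^ 2 else 0)
          = ∑ w : Fin n → Bool,
            if restrictTo (supp T)ᶜ w = z then ‖ψ t w‖ ^ 2 else 0 := by
        intro z
        rw [hψt]
        exact marginal_pres (supp T) V hVu (U T) hVU (ψ t) z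
      have hstep := step_lemma (supp T) (fun w => ‖ψ (t + 1) w‖ ^ 2)
        (fun w => ‖ψ t w‖ ^ 2) (fun w => by positivity) (fun w => by positivity)
        hmarg (M T) hMT x
      rw [hQt]
      have hQeq : ∀ x' : Fin n → Bool, M T x x' * Q t x' = M T x x' * ‖ψ t x'‖ ^ 2 := by
        intro x'
        rw [ih (le_of_lt htm) x']
      calc (∑ x', M T x x' * Q t x') = ∑ x', M T x x' * ‖ψ t x'‖ ^ 2 :=
            Finset.sum_congr rfl fun x' _ => hQeq x'
        _ = ‖ψ (t + 1) x‖ ^ 2 := hstep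
  intro x
  exact main m le_rfl x
end

section
/- Robustness of the gate-by-gate algorithm to amplitude errors: Let U = U_m ⋯ U_1 be an n-qubit circuit with gates U_t supported on supp(U_t), set A_t := {1,…,n} \setminus supp(U_t), and let ψ_t = U_t ⋯ U_1 |0^n⟩ and P_t(x) = |⟨x|ψ_t⟩|². Suppose φ_0 = |0^n⟩ and for t = 1,…,m−1, φ_t ∈ (ℂ²)^{⊗n} are nonzero vectors with ‖ψ_t − φ_t‖ ≤ ε_t. Define probability distributions R_t(x) = |⟨x|U_t φ_{t−1}⟩|² / ‖φ_{t−1}‖² for t = 1,…,m, and for each t let M̃_t be any stochastic matrix on {0,1}^n satisfying M̃_t(y|x) = [y_{A_t} = x_{A_t}] · R_t(y)/R_t(x_{A_t}) whenever R_t(x_{A_t}) > 0. Let Q = M̃_m ⋯ M̃_1 δ_{0^n} be the output distribution of the modified algorithm. Then ‖Q − P_m‖₁ := Σ_{x ∈ {0,1}^n} |Q(x) − P_m(x)| ≤ 16 Σ_{t=1}^{m−1} ε_t. -/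
open Matrix

/-- The Hilbert-space (ℓ²) norm of a vector of amplitudes. -/
noncomputable def l2norm {ι : Type*} [Fintype ι] (v : ι → ℂ) : ℝ :=
  Real.sqrt (∑ i, ‖v i‖ ^ 2)

/-! ### Auxiliary lemmas -/

lemma l2norm_eq_norm {ι : Type*} [Fintype ι] (v : ι → ℂ) :
    l2norm v = ‖(WithLp.equiv 2 (ι → ℂ)).symm v‖ := by
  rw [EuclideanSpace.norm_eq, l2norm]; rfl

lemma l2norm_nonneg {ι : Type*} [Fintype ι] (v : ι → ℂ) : 0 ≤ l2norm v :=
  Real.sqrt_nonneg _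

lemma norm_hat {ι : Type*} [Fintype ι] (ψ v : ι → ℂ) (hψ : l2norm ψ = 1)
    (hv : v ≠ 0) :
    l2norm (((l2norm v : ℂ))⁻¹ • v) = 1 ∧
    l2norm (ψ - ((l2norm v : ℂ))⁻¹ • v) ≤ 2 * l2norm (ψ - v) := by
  set F := (WithLp.equiv 2 (ι → ℂ)).symm with hF
  have hFsub : ∀ a b : ι → ℂ, F (a - b) = F a - F b := fun a b => rfl
  have hFsmul : ∀ (c : ℂ) (a : ι → ℂ), F (c • a) = c • F a := fun c a => rfl
  have hFzero : F v ≠ 0 := fun h => hv ((WithLp.equiv 2 (ι → ℂ)).symm.injective (h.trans rfl))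
  have hN : 0 < ‖F v‖ := norm_pos_iff.mpr hFzero
  set N := ‖F v‖ with hNdef
  have hl2v : l2norm v = N := l2norm_eq_norm v
  have hnormc : ‖((N : ℂ))⁻¹‖ = N⁻¹ := by
    rw [norm_inv, Complex.norm_real, Real.norm_eq_abs, abs_of_pos hN]
  have habs : |1 - N⁻¹| * N = |N - 1| := by
    have e : (1 - N⁻¹) * N = N - 1 := by field_simp
    rw [show |N - 1| = |(1 - N⁻¹) * N| by rw [e], abs_mul, abs_of_pos hN]
  constructor
  · rw [hl2v, l2norm_eq_norm, hFsmul, norm_smul, hnormc]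
    field_simp
    exact hNdef.symm
  · rw [hl2v, l2norm_eq_norm, l2norm_eq_norm, hFsub, hFsub]
    have tri : ‖F ψ - F ((N:ℂ)⁻¹ • v)‖ ≤ ‖F ψ - F v‖ + ‖F v - F ((N:ℂ)⁻¹ • v)‖ :=
      norm_sub_le_norm_sub_add_norm_sub _ _ _
    have h2 : ‖F v - F ((N:ℂ)⁻¹ • v)‖ = |N - 1| := by
      rw [hFsmul]
      have e1 : F v - (N:ℂ)⁻¹ • F v = (1 - (N:ℂ)⁻¹) • F v := by
        rw [sub_smul, one_smul]
      rw [e1, norm_smul]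
      have e2 : (1 - ((N:ℂ))⁻¹) = ((1 - N⁻¹ : ℝ) : ℂ) := by push_cast; ring
      rw [e2, Complex.norm_real, Real.norm_eq_abs, ← hNdef, habs]
    have h3 : |N - 1| ≤ ‖F ψ - F v‖ := by
      have h4 := abs_norm_sub_norm_le (F v) (F ψ)
      have h5 : ‖F ψ‖ = 1 := by rw [← l2norm_eq_norm, hψ]
      rw [h5, norm_sub_rev] at h4
      exact h4
    linarith

lemma cs_sum {ι : Type*} [Fintype ι] (f g : ι → ℝ) (hf : ∀ i, 0 ≤ f i) (hg : ∀ i, 0 ≤ g i) :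
    ∑ i, f i * g i ≤ Real.sqrt (∑ i, f i ^ 2) * Real.sqrt (∑ i, g i ^ 2) := by
  have h := Finset.sum_mul_sq_le_sq_mul_sq Finset.univ f g
  have hnn : 0 ≤ ∑ i, f i * g i :=
    Finset.sum_nonneg fun i _ => mul_nonneg (hf i) (hg i)
  calc ∑ i, f i * g i = Real.sqrt ((∑ i, f i * g i) ^ 2) := (Real.sqrt_sq hnn).symm
    _ ≤ Real.sqrt ((∑ i, f i ^ 2) * ∑ i, g i ^ 2) := Real.sqrt_le_sqrt h
    _ = _ := Real.sqrt_mul (Finset.sum_nonneg fun i _ => sq_nonneg _) _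

lemma tv_le {ι : Type*} [Fintype ι] (a b : ι → ℂ) :
    ∑ x, |‖a x‖ ^ 2 - ‖b x‖ ^ 2| ≤ l2norm (a - b) * (l2norm a + l2norm b) := by
  have step1 : ∀ x, |‖a x‖ ^ 2 - ‖b x‖ ^ 2| ≤ ‖(a - b) x‖ * ‖a x‖ + ‖(a - b) x‖ * ‖b x‖ := by
    intro x
    have h1 : ‖a x‖ ^ 2 - ‖b x‖ ^ 2 = (‖a x‖ - ‖b x‖) * (‖a x‖ + ‖b x‖) := by ring
    have h2 : |‖a x‖ - ‖b x‖| ≤ ‖a x - b x‖ := abs_norm_sub_norm_le _ _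
    have h3 : (0:ℝ) ≤ ‖a x‖ + ‖b x‖ := by positivity
    calc |‖a x‖ ^ 2 - ‖b x‖ ^ 2| = |‖a x‖ - ‖b x‖| * (‖a x‖ + ‖b x‖) := by
          rw [h1, abs_mul, abs_of_nonneg h3]
      _ ≤ ‖a x - b x‖ * (‖a x‖ + ‖b x‖) := mul_le_mul_of_nonneg_right h2 h3
      _ = ‖(a - b) x‖ * ‖a x‖ + ‖(a - b) x‖ * ‖b x‖ := by
          simp [Pi.sub_apply]; ring
  calc ∑ x, |‖a x‖ ^ 2 - ‖b x‖ ^ 2|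
      ≤ ∑ x, (‖(a - b) x‖ * ‖a x‖ + ‖(a - b) x‖ * ‖b x‖) :=
        Finset.sum_le_sum fun x _ => step1 x
    _ = (∑ x, ‖(a - b) x‖ * ‖a x‖) + ∑ x, ‖(a - b) x‖ * ‖b x‖ := Finset.sum_add_distrib
    _ ≤ l2norm (a - b) * l2norm a + l2norm (a - b) * l2norm b := by
        refine add_le_add ?_ ?_ <;>
          exact cs_sum _ _ (fun i => norm_nonneg _) (fun i => norm_nonneg _)
    _ = l2norm (a - b) * (l2norm a + l2norm b) := by ring

lemma unitary_sum_sq {ι : Type*} [Fintype ι] [DecidableEq ι]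
    (U : Matrix ι ι ℂ) (hU : U ∈ Matrix.unitaryGroup ι ℂ)
    (v : ι → ℂ) : ∑ x, ‖U.mulVec v x‖^2 = ∑ x, ‖v x‖^2 := by
  have key : ∀ w : ι → ℂ, star w ⬝ᵥ w = ((∑ x, ‖w x‖^2 : ℝ) : ℂ) := by
    intro w
    simp only [dotProduct, Pi.star_apply, Complex.ofReal_sum]
    refine Finset.sum_congr rfl fun x _ => ?_
    simp [Complex.star_def, ← Complex.normSq_eq_conj_mul_self,
      Complex.normSq_eq_norm_sq]
  have hUU : Uᴴ * U = 1 := Matrix.mem_unitaryGroup_iff'.mp hU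
  have h1 : star (U.mulVec v) ⬝ᵥ (U.mulVec v) = star v ⬝ᵥ v := by
    rw [Matrix.star_mulVec, ← Matrix.dotProduct_mulVec, Matrix.mulVec_mulVec,
      hUU, Matrix.one_mulVec]
  rw [key, key] at h1
  exact_mod_cast h1

/-- Marginal of `f` over the fibers of the coloring `c`. -/
noncomputable def margF {ι κ : Type*} [Fintype ι] [DecidableEq κ]
    (c : ι → κ) (f : ι → ℝ) (x : ι) : ℝ :=
  ∑ w, if c w = c x then f w else 0

lemma margF_congr {ι κ : Type*} [Fintype ι] [DecidableEq κ]
    (c : ι → κ) (f : ι → ℝ) {x y : ι} (h : c x = c y) :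
    margF c f x = margF c f y := by
  unfold margF
  exact Finset.sum_congr rfl fun w _ => by rw [h]

lemma margF_nonneg {ι κ : Type*} [Fintype ι] [DecidableEq κ]
    (c : ι → κ) (f : ι → ℝ) (hf : ∀ x, 0 ≤ f x) (x : ι) :
    0 ≤ margF c f x :=
  Finset.sum_nonneg fun w _ => by split <;> simp [hf w]

lemma le_margF {ι κ : Type*} [Fintype ι] [DecidableEq κ]
    (c : ι → κ) (f : ι → ℝ) (hf : ∀ x, 0 ≤ f x) (x : ι) :
    f x ≤ margF c f x := by
  unfold margF
  have : f x = if c x = c x then f x else 0 := by simp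
  rw [this]
  exact Finset.single_le_sum (f := fun w => if c w = c x then f w else 0)
    (fun w _ => by split <;> simp [hf w]) (Finset.mem_univ x)

section fiber
variable {n : ℕ} (S : Finset (Fin n)) (x : Fin n → Bool)

/-- merge a configuration on `S` with `x` outside `S`. -/
def mergeS (s : {i : Fin n // i ∈ S} → Bool) : Fin n → Bool :=
  fun i => if h : i ∈ S then s ⟨i, h⟩ else x i

lemma mergeS_restrict (s : {i : Fin n // i ∈ S} → Bool) :
    restrictTo S (mergeS S x s) = s := by
  funext i
  simp [restrictTo, mergeS, i.2]

lemma mergeS_restrict_compl (s : {i : Fin n // i ∈ S} → Bool) :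
    restrictTo Sᶜ (mergeS S x s) = restrictTo Sᶜ x := by
  funext i
  have : ¬ (i.1 ∈ S) := Finset.mem_compl.mp i.2
  simp [restrictTo, mergeS, this]

lemma mergeS_of_fiber (w : Fin n → Bool)
    (hw : restrictTo Sᶜ w = restrictTo Sᶜ x) :
    mergeS S x (restrictTo S w) = w := by
  funext i
  by_cases h : i ∈ S
  · simp [mergeS, h, restrictTo]
  · have := congrFun hw ⟨i, Finset.mem_compl.mpr h⟩
    simp only [restrictTo] at this
    simp [mergeS, h, this.symm]

lemma sum_fiber {M : Type*} [AddCommMonoid M] (f : (Fin n → Bool) → M) :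
    ∑ w, (if restrictTo Sᶜ w = restrictTo Sᶜ x then f w else 0)
      = ∑ s, f (mergeS S x s) := by
  classical
  rw [← Finset.sum_filter]
  refine Finset.sum_nbij' (fun w => restrictTo S w) (fun s => mergeS S x s)
    ?_ ?_ ?_ ?_ ?_
  · intro w _; exact Finset.mem_univ _
  · intro s _
    simp [Finset.mem_filter, mergeS_restrict_compl]
  · intro w hw
    exact mergeS_of_fiber S x w (Finset.mem_filter.mp hw).2
  · intro s _
    exact mergeS_restrict S x s
  · intro w hw
    rw [mergeS_of_fiber S x w (Finset.mem_filter.mp hw).2]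

end fiber

lemma marg_invariant {n : ℕ} (S : Finset (Fin n))
    (U : Matrix (Fin n → Bool) (Fin n → Bool) ℂ)
    (V : Matrix ({i : Fin n // i ∈ S} → Bool) ({i : Fin n // i ∈ S} → Bool) ℂ)
    (hV : V ∈ Matrix.unitaryGroup ({i : Fin n // i ∈ S} → Bool) ℂ)
    (hUV : ∀ x y, U x y = if restrictTo Sᶜ x = restrictTo Sᶜ y
      then V (restrictTo S x) (restrictTo S y) else 0)
    (v : (Fin n → Bool) → ℂ) (x : Fin n → Bool) :
    margF (restrictTo Sᶜ) (fun w => ‖U.mulVec v w‖^2) x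
      = margF (restrictTo Sᶜ) (fun w => ‖v w‖^2) x := by
  classical
  set vx : ({i : Fin n // i ∈ S} → Bool) → ℂ := fun s => v (mergeS S x s) with hvx
  have key : ∀ s, U.mulVec v (mergeS S x s) = V.mulVec vx s := by
    intro s
    have e1 : U.mulVec v (mergeS S x s)
        = ∑ y, (if restrictTo Sᶜ y = restrictTo Sᶜ x
            then V s (restrictTo S y) * v y else 0) := by
      simp only [Matrix.mulVec, dotProduct]
      refine Finset.sum_congr rfl fun y _ => ?_
      rw [hUV, mergeS_restrict_compl, mergeS_restrict]
      by_cases h : restrictTo Sᶜ x = restrictTo Sᶜ y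
      · rw [if_pos h, if_pos h.symm]
      · rw [if_neg h, if_neg (fun h' => h h'.symm), zero_mul]
    rw [e1, sum_fiber S x (fun y => V s (restrictTo S y) * v y)]
    simp only [Matrix.mulVec, dotProduct, hvx]
    refine Finset.sum_congr rfl fun s' _ => ?_
    rw [mergeS_restrict]
  unfold margF
  rw [sum_fiber S x (fun w => ‖U.mulVec v w‖^2), sum_fiber S x (fun w => ‖v w‖^2)]
  calc ∑ s, ‖U.mulVec v (mergeS S x s)‖^2
      = ∑ s, ‖V.mulVec vx s‖^2 :=
        Finset.sum_congr rfl fun s _ => by rw [key s]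
    _ = ∑ s, ‖vx s‖^2 := unitary_sum_sq V hV vx
    _ = ∑ s, ‖v (mergeS S x s)‖^2 := rfl

lemma step_est {ι κ : Type*} [Fintype ι] [DecidableEq κ]
    (c : ι → κ) (P P' R G : ι → ℝ) (M : ι → ι → ℝ)
    (hP : ∀ x, 0 ≤ P x) (hG : ∀ x, 0 ≤ G x) (hR : ∀ x, 0 ≤ R x)
    (hP' : ∀ x, 0 ≤ P' x)
    (hMnn : ∀ x y, 0 ≤ M y x) (hMsum : ∀ x, ∑ y, M y x = 1)
    (hM : ∀ x y, 0 < margF c R x →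
      M y x = if c y = c x then R y / margF c R x else 0)
    (hmarg : ∀ x, margF c R x = margF c G x) :
    ∑ y, |(∑ x, M y x * P x) - P' y|
      ≤ 2 * (∑ x, |P x - G x|) + ∑ x, |R x - P' x| := by
  classical
  set D : ι → ℝ := fun w => |P w - G w| with hD
  have hR0 : ∀ x, ¬ 0 < margF c R x → R x = 0 := fun x hx =>
    le_antisymm ((le_margF c R hR x).trans (not_lt.mp hx)) (hR x)
  have hG0 : ∀ x, ¬ 0 < margF c R x → G x = 0 := fun x hx =>
    le_antisymm ((le_margF c G hG x).trans (by rw [← hmarg]; exact not_lt.mp hx)) (hG x)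
  set T : ι → ℝ := fun y => ∑ x, if 0 < margF c R x then M y x * P x else 0 with hTdef
  set E : ι → ℝ := fun y => ∑ x, if 0 < margF c R x then 0 else M y x * P x with hEdef
  have hsplit : ∀ y, (∑ x, M y x * P x) = T y + E y := by
    intro y
    rw [hTdef, hEdef, ← Finset.sum_add_distrib]
    exact Finset.sum_congr rfl fun x _ => by split <;> simp
  have hEnn : ∀ y, 0 ≤ E y :=
    fun y => Finset.sum_nonneg fun x _ => by
      split
      · exact le_rfl
      · exact mul_nonneg (hMnn x y) (hP x)
  have hEsum : ∑ y, E y ≤ ∑ x, D x := by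
    rw [hEdef, Finset.sum_comm]
    refine Finset.sum_le_sum fun x _ => ?_
    by_cases hx : 0 < margF c R x
    · simp only [if_pos hx, Finset.sum_const_zero]
      positivity
    · simp only [if_neg hx, ← Finset.sum_mul, hMsum x, one_mul, hD]
      rw [show P x - G x = P x by rw [hG0 x hx]; ring] at *
      exact le_abs_self _
  have hT : ∀ y, T y = if 0 < margF c R y
      then R y * margF c P y / margF c R y else 0 := by
    intro y
    by_cases hy : 0 < margF c R y
    · rw [if_pos hy, hTdef]
      have e1 : (fun x => if 0 < margF c R x then M y x * P x else 0)
          = fun x => if c x = c y then R y / margF c R y * P x else 0 := by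
        funext x
        by_cases hc : c x = c y
        · have hx : 0 < margF c R x := by rw [margF_congr c R hc]; exact hy
          rw [if_pos hx, if_pos hc, hM x y hx, if_pos hc.symm, margF_congr c R hc]
        · by_cases hx : 0 < margF c R x
          · rw [if_pos hx, hM x y hx, if_neg (fun h => hc h.symm), zero_mul, if_neg hc]
          · rw [if_neg hx, if_neg hc]
      simp only [e1]
      rw [show (∑ x, if c x = c y then R y / margF c R y * P x else 0)
            = R y / margF c R y * ∑ x, (if c x = c y then P x else 0) by
          rw [Finset.mul_sum]
          exact Finset.sum_congr rfl fun x _ => by split <;> simp]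
      rw [div_mul_eq_mul_div]
      rfl
    · rw [if_neg hy, hTdef]
      refine Finset.sum_eq_zero fun x _ => ?_
      by_cases hx : 0 < margF c R x
      · rw [if_pos hx, hM x y hx,
          if_neg (fun h => hy (by rw [margF_congr c R h]; exact hx)), zero_mul]
      · rw [if_neg hx]
  have hTP : ∀ y, |T y - P' y|
      ≤ (if 0 < margF c R y
          then R y * |margF c P y - margF c R y| / margF c R y else 0)
        + |R y - P' y| := by
    intro y
    rw [hT y]
    by_cases hy : 0 < margF c R y
    · rw [if_pos hy, if_pos hy]
      have hne : margF c R y ≠ 0 := ne_of_gt hy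
      have e : R y * margF c P y / margF c R y - P' y
          = R y * (margF c P y - margF c R y) / margF c R y + (R y - P' y) := by
        field_simp
        ring
      rw [e]
      refine (abs_add_le _ _).trans (add_le_add ?_ le_rfl)
      rw [abs_div, abs_of_pos hy, abs_mul, abs_of_nonneg (hR y)]
    · rw [if_neg hy, if_neg hy, hR0 y hy, zero_add]
  have habs : ∀ y, |margF c P y - margF c R y| ≤ margF c D y := by
    intro y
    rw [hmarg y]
    unfold margF
    rw [← Finset.sum_sub_distrib]
    refine (Finset.abs_sum_le_sum_abs _ _).trans (Finset.sum_le_sum fun w _ => ?_)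
    by_cases hc : c w = c y <;> simp [hc, hD]
  have hI : ∀ w, (∑ y, if 0 < margF c R y
      then (if c w = c y then R y / margF c R y else 0) else 0) ≤ 1 := by
    intro w
    by_cases hw : 0 < margF c R w
    · have e : ∀ y, (if 0 < margF c R y
          then (if c w = c y then R y / margF c R y else 0) else 0)
          = (if c y = c w then R y else 0) / margF c R w := by
        intro y
        by_cases hc : c w = c y
        · have hy : 0 < margF c R y := by rw [margF_congr c R hc.symm]; exact hw
          rw [if_pos hy, if_pos hc, if_pos hc.symm, margF_congr c R hc.symm]
        · have hc' : ¬ c y = c w := fun h => hc h.symm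
          simp [hc, hc']
      rw [Finset.sum_congr rfl fun y _ => e y, ← Finset.sum_div]
      rw [show (∑ y, if c y = c w then R y else 0) = margF c R w from rfl]
      rw [div_self (ne_of_gt hw)]
    · refine le_trans (le_of_eq (Finset.sum_eq_zero fun y _ => ?_)) zero_le_one
      by_cases hy : 0 < margF c R y
      · rw [if_pos hy, if_neg (fun h => hw (by rw [margF_congr c R h]; exact hy))]
      · rw [if_neg hy]
  have hSigma : ∑ y, (if 0 < margF c R y
        then R y * |margF c P y - margF c R y| / margF c R y else 0)
      ≤ ∑ x, D x := by
    have step1 : ∑ y, (if 0 < margF c R y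
        then R y * |margF c P y - margF c R y| / margF c R y else 0)
        ≤ ∑ y, (if 0 < margF c R y then R y * margF c D y / margF c R y else 0) := by
      refine Finset.sum_le_sum fun y _ => ?_
      by_cases hy : 0 < margF c R y
      · rw [if_pos hy, if_pos hy]
        gcongr
        · exact hR y
        · exact habs y
      · rw [if_neg hy, if_neg hy]
    refine step1.trans ?_
    have e1 : ∀ y, (if 0 < margF c R y then R y * margF c D y / margF c R y else 0)
        = ∑ w, D w * (if 0 < margF c R y
            then (if c w = c y then R y / margF c R y else 0) else 0) := by
      intro y
      by_cases hy : 0 < margF c R y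
      · simp only [if_pos hy]
        have hMD : margF c D y = ∑ w, if c w = c y then D w else 0 := rfl
        rw [hMD, show R y * (∑ w, if c w = c y then D w else 0) / margF c R y
              = (∑ w, if c w = c y then D w else 0) * (R y / margF c R y) by ring]
        rw [Finset.sum_mul]
        exact Finset.sum_congr rfl fun w _ => by split <;> simp
      · simp [hy]
    rw [Finset.sum_congr rfl fun y _ => e1 y, Finset.sum_comm]
    calc ∑ w, ∑ y, D w * (if 0 < margF c R y
            then (if c w = c y then R y / margF c R y else 0) else 0)
        = ∑ w, D w * ∑ y, (if 0 < margF c R y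
            then (if c w = c y then R y / margF c R y else 0) else 0) :=
          Finset.sum_congr rfl fun w _ => (Finset.mul_sum _ _ _).symm
      _ ≤ ∑ w, D w * 1 :=
          Finset.sum_le_sum fun w _ =>
            mul_le_mul_of_nonneg_left (hI w) (abs_nonneg _)
      _ = ∑ w, D w := by simp
  calc ∑ y, |(∑ x, M y x * P x) - P' y|
      = ∑ y, |T y + E y - P' y| :=
        Finset.sum_congr rfl fun y _ => by rw [hsplit y]
    _ ≤ ∑ y, (E y + |T y - P' y|) := by
        refine Finset.sum_le_sum fun y _ => ?_
        rw [show T y + E y - P' y = E y + (T y - P' y) by ring]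
        exact (abs_add_le _ _).trans (by rw [abs_of_nonneg (hEnn y)])
    _ = (∑ y, E y) + ∑ y, |T y - P' y| := Finset.sum_add_distrib
    _ ≤ (∑ x, D x) + ((∑ y, (if 0 < margF c R y
          then R y * |margF c P y - margF c R y| / margF c R y else 0))
        + ∑ y, |R y - P' y|) := by
        refine add_le_add hEsum ?_
        rw [← Finset.sum_add_distrib]
        exact Finset.sum_le_sum fun y _ => hTP y
    _ ≤ (∑ x, D x) + ((∑ x, D x) + ∑ y, |R y - P' y|) :=
        add_le_add le_rfl (add_le_add hSigma le_rfl)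
    _ = 2 * (∑ x, D x) + ∑ x, |R x - P' x| := by ring

/-- Robustness of the gate-by-gate algorithm to amplitude errors.
With `ψ t` the exact intermediate states and `φ t` nonzero approximations
satisfying `‖ψ t − φ t‖ ≤ ε t` for `t = 1, …, m−1` (and `φ 0 = |0^n⟩`),
let `R t` be the distribution of measuring `U_t φ_{t-1}` (normalized), and let
`M t` be stochastic matrices implementing the conditional resampling step of
the gate-by-gate algorithm with `R t` in place of the exact distribution.
Then the output distribution `Q m` of the modified algorithm satisfies
`‖Q m − P_m‖₁ ≤ 16 Σ_{t=1}^{m-1} ε t`. -/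
theorem stmt_3 (n m : ℕ) (hm : 1 ≤ m)
    (U : Fin m → Matrix (Fin n → Bool) (Fin n → Bool) ℂ)
    (supp : Fin m → Finset (Fin n))
    (hU : ∀ t, U t ∈ Matrix.unitaryGroup (Fin n → Bool) ℂ)
    (hsupp : ∀ t : Fin m,
      ∃ V ∈ Matrix.unitaryGroup ({i : Fin n // i ∈ supp t} → Bool) ℂ,
        ∀ x y : Fin n → Bool,
          U t x y = if restrictTo (supp t)ᶜ x = restrictTo (supp t)ᶜ y
            then V (restrictTo (supp t) x) (restrictTo (supp t) y) else 0)
    (ψ φ : ℕ → (Fin n → Bool) → ℂ) (ε : ℕ → ℝ)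
    (hψ0 : ψ 0 = fun x => if x = (fun _ => false) then 1 else 0)
    (hψ : ∀ t : Fin m, ψ (t + 1) = (U t).mulVec (ψ t))
    (hφ0 : φ 0 = fun x => if x = (fun _ => false) then 1 else 0)
    (hφne : ∀ t : ℕ, 1 ≤ t → t ≤ m - 1 → φ t ≠ 0)
    (hclose : ∀ t : ℕ, 1 ≤ t → t ≤ m - 1 → l2norm (ψ t - φ t) ≤ ε t)
    (R : Fin m → (Fin n → Bool) → ℝ)
    (hR : ∀ t : Fin m, ∀ x : Fin n → Bool,
      R t x = ‖(U t).mulVec (φ t) x‖ ^ 2 / (l2norm (φ t)) ^ 2)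
    (M : Fin m → (Fin n → Bool) → (Fin n → Bool) → ℝ)
    (hMnn : ∀ t x y, 0 ≤ M t y x)
    (hMsum : ∀ t x, ∑ y, M t y x = 1)
    (hM : ∀ t : Fin m, ∀ x y : Fin n → Bool,
      0 < (∑ w : Fin n → Bool,
          if restrictTo (supp t)ᶜ w = restrictTo (supp t)ᶜ x then R t w else 0) →
      M t y x = if restrictTo (supp t)ᶜ y = restrictTo (supp t)ᶜ x
        then R t y /
          (∑ w : Fin n → Bool,
            if restrictTo (supp t)ᶜ w = restrictTo (supp t)ᶜ x then R t w else 0)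
        else 0)
    (Q : ℕ → (Fin n → Bool) → ℝ)
    (hQ0 : Q 0 = fun x => if x = (fun _ => false) then 1 else 0)
    (hQ : ∀ t : Fin m, Q (t + 1) = fun y => ∑ x, M t y x * Q t x) :
    ∑ x : Fin n → Bool, |Q m x - ‖ψ m x‖ ^ 2|
      ≤ 16 * ∑ t ∈ Finset.Icc 1 (m - 1), ε t := by
  classical
  -- the effective per-step error
  set εn : ℕ → ℝ := fun k => if k = 0 then 0 else ε k with hεn
  -- norms of the exact states
  have hψnorm : ∀ k : ℕ, k ≤ m → ∑ x, ‖ψ k x‖ ^ 2 = 1 := by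
    intro k
    induction k with
    | zero =>
      intro _
      rw [hψ0]
      have e : ∀ x : Fin n → Bool,
          ‖(if x = (fun _ => false) then (1:ℂ) else 0)‖ ^ 2
          = if x = (fun _ => false) then (1:ℝ) else 0 := by
        intro x; split <;> simp
      simp only [e]
      rw [Finset.sum_ite_eq' Finset.univ]
      simp
    | succ k ih =>
      intro hk
      have hkm : k < m := hk
      set t : Fin m := ⟨k, hkm⟩ with ht
      have h1 : ψ (k + 1) = (U t).mulVec (ψ k) := hψ t
      rw [h1, unitary_sum_sq (U t) (hU t) (ψ k)]
      exact ih (le_of_lt hkm)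
  have hψl2 : ∀ k : ℕ, k ≤ m → l2norm (ψ k) = 1 := by
    intro k hk
    rw [l2norm, hψnorm k hk, Real.sqrt_one]
  -- nonzero approximations for every index `t : Fin m`
  have hφne' : ∀ t : Fin m, φ t ≠ 0 := by
    intro t
    rcases Nat.eq_zero_or_pos t.1 with h0 | h1
    · rw [h0, hφ0]
      intro h
      have := congrFun h (fun _ => false)
      simp at this
    · exact hφne t.1 h1 (Nat.le_sub_one_of_lt t.2)
  -- the normalized approximations
  set hatφ : Fin m → (Fin n → Bool) → ℂ :=
    fun t => ((l2norm (φ t) : ℂ))⁻¹ • φ t with hhatφ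
  have hεnn : ∀ t : Fin m, 0 ≤ εn t.1 := by
    intro t
    rcases Nat.eq_zero_or_pos t.1 with h0 | h1
    · simp [hεn, h0]
    · have h2 : t.1 ≤ m - 1 := Nat.le_sub_one_of_lt t.2
      have := (l2norm_nonneg (ψ t.1 - φ t.1)).trans (hclose t.1 h1 h2)
      simp [hεn, Nat.pos_iff_ne_zero.mp h1, this]
  have hhat : ∀ t : Fin m, l2norm (hatφ t) = 1 ∧
      l2norm (ψ t.1 - hatφ t) ≤ 2 * εn t.1 := by
    intro t
    rcases Nat.eq_zero_or_pos t.1 with h0 | h1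
    · have hφψ : φ t.1 = ψ t.1 := by rw [h0, hφ0, hψ0]
      have h2 := norm_hat (ψ t.1) (φ t.1) (hψl2 t.1 (le_of_lt t.2)) (hφne' t)
      refine ⟨h2.1, ?_⟩
      refine h2.2.trans ?_
      rw [hφψ, sub_self]
      have : l2norm (0 : (Fin n → Bool) → ℂ) = 0 := by
        simp [l2norm]
      rw [this, mul_zero]
      simp [hεn, h0]
    · have h2 : t.1 ≤ m - 1 := Nat.le_sub_one_of_lt t.2
      have h3 := norm_hat (ψ t.1) (φ t.1) (hψl2 t.1 (le_of_lt t.2)) (hφne' t)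
      refine ⟨h3.1, h3.2.trans ?_⟩
      have : εn t.1 = ε t.1 := by simp [hεn, Nat.pos_iff_ne_zero.mp h1]
      rw [this]
      have := hclose t.1 h1 h2
      linarith
  -- R in terms of the normalized state
  have hRG : ∀ t : Fin m, R t = fun x => ‖(U t).mulVec (hatφ t) x‖ ^ 2 := by
    intro t
    funext x
    rw [hR t x, hhatφ]
    have hφpos : 0 < l2norm (φ t) := by
      rcases lt_or_eq_of_le (l2norm_nonneg (φ t)) with h | h
      · exact h
      · exfalso
        apply hφne' t
        have h2 : ‖(WithLp.equiv 2 ((Fin n → Bool) → ℂ)).symm (φ t)‖ = 0 := by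
          rw [← l2norm_eq_norm, ← h]
        exact (WithLp.equiv 2 ((Fin n → Bool) → ℂ)).symm.injective
          (norm_eq_zero.mp h2)
    have e1 : (U t).mulVec (((l2norm (φ t) : ℂ))⁻¹ • φ t)
        = ((l2norm (φ t) : ℂ))⁻¹ • (U t).mulVec (φ t) := by
      rw [Matrix.mulVec_smul]
    rw [e1]
    simp only [Pi.smul_apply, smul_eq_mul, norm_mul, mul_pow, norm_inv,
      Complex.norm_real, Real.norm_eq_abs, abs_of_pos hφpos]
    rw [inv_pow]
    field_simp
  -- per-step error bound
  have hstep : ∀ t : Fin m,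
      ∑ y, |(∑ x, M t y x * ‖ψ t.1 x‖ ^ 2) - ‖ψ (t.1 + 1) y‖ ^ 2|
        ≤ 12 * εn t.1 := by
    intro t
    obtain ⟨V, hV, hUV⟩ := hsupp t
    set c := restrictTo (supp t)ᶜ with hc
    set G : (Fin n → Bool) → ℝ := fun x => ‖hatφ t x‖ ^ 2 with hG
    have hmargRG : ∀ x, margF c (R t) x = margF c G x := by
      intro x
      rw [hRG t, hG]
      exact marg_invariant (supp t) (U t) V hV hUV (hatφ t) x
    have hMt : ∀ x y, 0 < margF c (R t) x →
        M t y x = if c y = c x then R t y / margF c (R t) x else 0 := by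
      intro x y hx
      exact hM t x y hx
    have key := step_est c (fun x => ‖ψ t.1 x‖ ^ 2) (fun y => ‖ψ (t.1 + 1) y‖ ^ 2)
      (R t) G (M t)
      (fun x => by positivity) (fun x => by positivity)
      (fun x => by rw [hRG t]; positivity) (fun x => by positivity)
      (fun x y => hMnn t x y) (fun x => hMsum t x) hMt hmargRG
    refine key.trans ?_
    -- first summand: TV between P_t and G
    have h1 : ∑ x, |‖ψ t.1 x‖ ^ 2 - G x| ≤ 4 * εn t.1 := by
      have := tv_le (ψ t.1) (hatφ t)
      rw [hψl2 t.1 (le_of_lt t.2), (hhat t).1] at this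
      have h2 := (hhat t).2
      nlinarith [this, h2, hεnn t]
    -- second summand: TV between R and P_{t+1}
    have h2 : ∑ x, |R t x - ‖ψ (t.1 + 1) x‖ ^ 2| ≤ 4 * εn t.1 := by
      have e1 : ψ (t.1 + 1) = (U t).mulVec (ψ t.1) := hψ t
      have e2 : ∀ x, R t x = ‖(U t).mulVec (hatφ t) x‖ ^ 2 := fun x => by rw [hRG t]
      have key2 := tv_le ((U t).mulVec (hatφ t)) ((U t).mulVec (ψ t.1))
      have e3 : (U t).mulVec (hatφ t) - (U t).mulVec (ψ t.1)
          = (U t).mulVec (hatφ t - ψ t.1) := (Matrix.mulVec_sub (U t) _ _).symm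
      have e4 : l2norm ((U t).mulVec (hatφ t - ψ t.1)) = l2norm (hatφ t - ψ t.1) := by
        rw [l2norm, l2norm, unitary_sum_sq (U t) (hU t)]
      have e5 : l2norm ((U t).mulVec (hatφ t)) = l2norm (hatφ t) := by
        rw [l2norm, l2norm, unitary_sum_sq (U t) (hU t)]
      have e6 : l2norm ((U t).mulVec (ψ t.1)) = l2norm (ψ t.1) := by
        rw [l2norm, l2norm, unitary_sum_sq (U t) (hU t)]
      rw [e3, e4, e5, e6, (hhat t).1, hψl2 t.1 (le_of_lt t.2)] at key2
      have e7 : l2norm (hatφ t - ψ t.1) = l2norm (ψ t.1 - hatφ t) := by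
        unfold l2norm
        congr 1
        exact Finset.sum_congr rfl fun x _ => by
          rw [Pi.sub_apply, Pi.sub_apply, norm_sub_rev]
      rw [e7] at key2
      calc ∑ x, |R t x - ‖ψ (t.1 + 1) x‖ ^ 2|
          = ∑ x, |‖(U t).mulVec (hatφ t) x‖ ^ 2 - ‖(U t).mulVec (ψ t.1) x‖ ^ 2| := by
            refine Finset.sum_congr rfl fun x _ => ?_
            rw [e2 x, e1]
        _ ≤ l2norm (ψ t.1 - hatφ t) * (1 + 1) := key2
        _ ≤ 4 * εn t.1 := by
            have := (hhat t).2
            linarith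
    linarith
  -- induction on the algorithm
  have hQP : ∀ k : ℕ, k ≤ m →
      ∑ x, |Q k x - ‖ψ k x‖ ^ 2| ≤ ∑ j ∈ Finset.range k, 12 * εn j := by
    intro k
    induction k with
    | zero =>
      intro _
      rw [hQ0, hψ0]
      simp only [Finset.range_zero, Finset.sum_empty]
      refine le_of_eq (Finset.sum_eq_zero fun x _ => ?_)
      by_cases h : x = (fun _ => false) <;> simp [h]
    | succ k ih =>
      intro hk
      have hkm : k < m := hk
      set t : Fin m := ⟨k, hkm⟩ with ht
      have hQk : Q (k + 1) = fun y => ∑ x, M t y x * Q k x := hQ t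
      rw [hQk, Finset.sum_range_succ]
      have main : ∀ y, |(∑ x, M t y x * Q k x) - ‖ψ (k+1) y‖ ^ 2|
          ≤ (∑ x, M t y x * |Q k x - ‖ψ k x‖ ^ 2|)
            + |(∑ x, M t y x * ‖ψ k x‖ ^ 2) - ‖ψ (k+1) y‖ ^ 2| := by
        intro y
        have esub : ∑ x, M t y x * (Q k x - ‖ψ k x‖ ^ 2)
            = (∑ x, M t y x * Q k x) - ∑ x, M t y x * ‖ψ k x‖ ^ 2 := by
          rw [← Finset.sum_sub_distrib]
          exact Finset.sum_congr rfl fun x _ => by ring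
        have e : (∑ x, M t y x * Q k x) - ‖ψ (k+1) y‖ ^ 2
            = (∑ x, M t y x * (Q k x - ‖ψ k x‖ ^ 2))
              + ((∑ x, M t y x * ‖ψ k x‖ ^ 2) - ‖ψ (k+1) y‖ ^ 2) := by
          rw [esub]; ring
        rw [e]
        refine (abs_add_le _ _).trans (add_le_add ?_ le_rfl)
        refine (Finset.abs_sum_le_sum_abs _ _).trans
          (Finset.sum_le_sum fun x _ => ?_)
        rw [abs_mul, abs_of_nonneg (hMnn t x y)]
      calc ∑ y, |(∑ x, M t y x * Q k x) - ‖ψ (k+1) y‖ ^ 2|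
          ≤ ∑ y, ((∑ x, M t y x * |Q k x - ‖ψ k x‖ ^ 2|)
            + |(∑ x, M t y x * ‖ψ k x‖ ^ 2) - ‖ψ (k+1) y‖ ^ 2|) :=
            Finset.sum_le_sum fun y _ => main y
        _ = (∑ y, ∑ x, M t y x * |Q k x - ‖ψ k x‖ ^ 2|)
            + ∑ y, |(∑ x, M t y x * ‖ψ k x‖ ^ 2) - ‖ψ (k+1) y‖ ^ 2| :=
            Finset.sum_add_distrib
        _ ≤ (∑ x, |Q k x - ‖ψ k x‖ ^ 2|) + 12 * εn k := by
            refine add_le_add ?_ (hstep t)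
            rw [Finset.sum_comm]
            refine le_of_eq (Finset.sum_congr rfl fun x _ => ?_)
            rw [← Finset.sum_mul, hMsum t x, one_mul]
        _ ≤ (∑ j ∈ Finset.range k, 12 * εn j) + 12 * εn k :=
            add_le_add (ih (le_of_lt hkm)) le_rfl
  -- conclude
  have hfin := hQP m le_rfl
  have hsum : ∑ j ∈ Finset.range m, 12 * εn j
      = 12 * ∑ t ∈ Finset.Icc 1 (m - 1), ε t := by
    rw [← Finset.mul_sum]
    congr 1
    have hIcc : Finset.Icc 1 (m - 1) = (Finset.range m).filter (fun j => ¬ j = 0) := by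
      ext j
      simp only [Finset.mem_Icc, Finset.mem_filter, Finset.mem_range]
      omega
    rw [hIcc, Finset.sum_filter]
    refine Finset.sum_congr rfl fun j _ => ?_
    by_cases h : j = 0 <;> simp [hεn, h]
  have hεsum : 0 ≤ ∑ t ∈ Finset.Icc 1 (m - 1), ε t := by
    refine Finset.sum_nonneg fun j hj => ?_
    obtain ⟨h1, h2⟩ := Finset.mem_Icc.mp hj
    exact (l2norm_nonneg (ψ j - φ j)).trans (hclose j h1 h2)
  rw [hsum] at hfin
  linarith
end

section
/- Magic ratio property, part (i): Let X be a finite index set. For a ∈ {1,…,m} and j in a finite index set J_a, let φ_{a,j} ∈ ℂ^X be vectors such that for each a and all j ≠ j', the supports Supp(φ_{a,j}) = {x ∈ X : ⟨x|φ_{a,j}⟩ ≠ 0} and Supp(φ_{a,j'}) are disjoint. Let P_a = Σ_{j ∈ J_a} |φ_{a,j}⟩⟨φ_{a,j}| and H = −Σ_{a=1}^m P_a. Let ψ ∈ ℂ^X satisfy P_a ψ = ψ for every a. Then for all x, y ∈ X: if ⟨x|H|y⟩ ≠ 0, then ⟨x|ψ⟩ = 0 if and only if ⟨y|ψ⟩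 = 0. -/
/-- Magic ratio property, part (i): let `H = −Σ_a P_a` where each
`P_a = Σ_j |φ_{a,j}⟩⟨φ_{a,j}|` is a sum of rank-one terms whose supports are
pairwise disjoint over `j`, and let `ψ` satisfy `P_a ψ = ψ` for every `a`
(frustration-freeness). Then `⟨x|H|y⟩ ≠ 0` implies that `⟨x|ψ⟩ = 0` iff
`⟨y|ψ⟩ = 0`. -/
theorem stmt_15 {X : Type*} [Fintype X] (m : ℕ)
    (J : Fin m → Type*) [∀ a, Fintype (J a)]
    (φ : (a : Fin m) → J a → X → ℂ)
    (hdisj : ∀ a : Fin m, ∀ j j' : J a, j ≠ j' →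
      ∀ x : X, φ a j x ≠ 0 → φ a j' x = 0)
    (P : Fin m → Matrix X X ℂ)
    (hP : ∀ a x y, P a x y = ∑ j, φ a j x * (starRingEnd ℂ) (φ a j y))
    (H : Matrix X X ℂ) (hH : H = -∑ a, P a)
    (ψ : X → ℂ) (hψ : ∀ a, (P a).mulVec ψ = ψ) :
    ∀ x y : X, H x y ≠ 0 → (ψ x = 0 ↔ ψ y = 0) := by
  intro x y hxy
  -- extract a, j with φ a j x ≠ 0 and φ a j y ≠ 0
  have hne : ∃ a : Fin m, ∃ j : J a, φ a j x ≠ 0 ∧ φ a j y ≠ 0 := by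
    by_contra hcon
    push_neg at hcon
    apply hxy
    rw [hH]
    simp only [Matrix.neg_apply, Matrix.sum_apply, neg_eq_zero]
    apply Finset.sum_eq_zero
    intro a _
    rw [hP]
    apply Finset.sum_eq_zero
    intro j _
    by_cases hx : φ a j x = 0
    · rw [hx, zero_mul]
    · rw [hcon a j hx, map_zero, mul_zero]
  obtain ⟨a, j, hx, hy⟩ := hne
  -- key: ψ z = φ a j z * c for z with φ a j z ≠ 0
  set c : ℂ := ∑ z, (starRingEnd ℂ) (φ a j z) * ψ z with hc
  have key : ∀ z : X, φ a j z ≠ 0 → ψ z = φ a j z * c := by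
    intro z hz
    have h1 : (P a).mulVec ψ z = ψ z := by rw [hψ a]
    rw [Matrix.mulVec, dotProduct] at h1
    calc ψ z = ∑ w, P a z w * ψ w := h1.symm
      _ = ∑ w, ∑ j', φ a j' z * ((starRingEnd ℂ) (φ a j' w) * ψ w) := by
          apply Finset.sum_congr rfl
          intro w _
          rw [hP, Finset.sum_mul]
          apply Finset.sum_congr rfl
          intro j' _
          ring
      _ = ∑ j', ∑ w, φ a j' z * ((starRingEnd ℂ) (φ a j' w) * ψ w) :=
          Finset.sum_comm
      _ = ∑ j', φ a j' z * ∑ w, (starRingEnd ℂ) (φ a j' w) * ψ w := by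
          simp [Finset.mul_sum]
      _ = φ a j z * c := by
          rw [hc]
          apply Finset.sum_eq_single j
          · intro j' _ hj'
            rw [hdisj a j j' (fun h => hj' h.symm) z hz, zero_mul]
          · intro h; exact absurd (Finset.mem_univ j) h
  have hpx := key x hx
  have hpy := key y hy
  rw [hpx, hpy]
  constructor <;> intro h <;>
    rcases mul_eq_zero.mp h with h' | h'
  · exact absurd h' hx
  · rw [h', mul_zero]
  · exact absurd h' hy
  · rw [h', mul_zero]
end

section
/- Magic ratio property, part (ii): Let X be a finite index set. For a ∈ {1,…,m} and j in a finite index set J_a, let φ_{a,j} ∈ ℂ^X be vectors such that for each a and all j ≠ j', the supports Supp(φ_{a,j}) = {x ∈ X : ⟨x|φ_{a,j}⟩ ≠ 0} and Supp(φ_{a,j'}) are disjoint. Let P_a = Σ_{j ∈ J_a} |φ_{a,j}⟩⟨φ_{a,j}| and H = −Σ_{a=1}^m P_a, and let ψ ∈ ℂ^X satisfy P_a ψ = ψ for every a. Then for all x, y ∈ X with ⟨x|H|y⟩ ≠ 0 and ⟨x|ψ⟩ ≠ 0, there exist a ∈ {1,…,m} and j ∈ J_a such that ⟨x|φ_{a,j}⟩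 ≠ 0, ⟨y|φ_{a,j}⟩ ≠ 0, and ⟨y|ψ⟩ / ⟨x|ψ⟩ = ⟨y|φ_{a,j}⟩ / ⟨x|φ_{a,j}⟩; moreover for this a the index j is the unique element of J_a with ⟨x|φ_{a,j}⟩ ≠ 0 and ⟨y|φ_{a,j}⟩ ≠ 0. -/
/-- Magic ratio property, part (ii): let `H = −Σ_a P_a` where each
`P_a = Σ_j |φ_{a,j}⟩⟨φ_{a,j}|` is a sum of rank-one terms whose supports are
pairwise disjoint over `j`, and let `ψ` satisfy `P_a ψ = ψ` for every `a`.
If `⟨x|H|y⟩ ≠ 0` and `⟨x|ψ⟩ ≠ 0`, then there are `a` and `j ∈ J_a` with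
`⟨x|φ_{a,j}⟩ ≠ 0`, `⟨y|φ_{a,j}⟩ ≠ 0`, and
`⟨y|ψ⟩/⟨x|ψ⟩ = ⟨y|φ_{a,j}⟩/⟨x|φ_{a,j}⟩`; moreover for this `a` the index `j`
is the unique one supporting both `x` and `y`. -/
theorem stmt_16 {X : Type*} [Fintype X] (m : ℕ)
    (J : Fin m → Type*) [∀ a, Fintype (J a)]
    (φ : (a : Fin m) → J a → X → ℂ)
    (hdisj : ∀ a : Fin m, ∀ j j' : J a, j ≠ j' →
      ∀ x : X, φ a j x ≠ 0 → φ a j' x = 0)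
    (P : Fin m → Matrix X X ℂ)
    (hP : ∀ a x y, P a x y = ∑ j, φ a j x * (starRingEnd ℂ) (φ a j y))
    (H : Matrix X X ℂ) (hH : H = -∑ a, P a)
    (ψ : X → ℂ) (hψ : ∀ a, (P a).mulVec ψ = ψ) :
    ∀ x y : X, H x y ≠ 0 → ψ x ≠ 0 →
      ∃ a : Fin m, ∃ j : J a,
        φ a j x ≠ 0 ∧ φ a j y ≠ 0 ∧
        ψ y / ψ x = φ a j y / φ a j x ∧
        ∀ j' : J a, φ a j' x ≠ 0 → φ a j' y ≠ 0 → j' = j := by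
  intro x y hHxy hψx
  -- Find a with P a x y ≠ 0
  have hPxy : ∃ a, P a x y ≠ 0 := by
    by_contra h
    push_neg at h
    apply hHxy
    rw [hH]
    simp only [Matrix.neg_apply, Matrix.sum_apply]
    simp [h]
  obtain ⟨a, ha⟩ := hPxy
  rw [hP] at ha
  obtain ⟨j, hj⟩ := Finset.exists_ne_zero_of_sum_ne_zero ha
  have hjx : φ a j x ≠ 0 := fun h => hj.2 (by simp [h])
  have hjy : φ a j y ≠ 0 := fun h => hj.2 (by simp [h])
  -- eigen-equation expansion: ψ z = ∑ j, φ a j z * c j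
  have key : ∀ z : X, ψ z = ∑ j', φ a j' z * ∑ w, (starRingEnd ℂ) (φ a j' w) * ψ w := by
    intro z
    have := congrFun (hψ a) z
    rw [Matrix.mulVec, dotProduct] at this
    calc ψ z = ∑ w, P a z w * ψ w := this.symm
      _ = ∑ w, ∑ j', φ a j' z * (starRingEnd ℂ) (φ a j' w) * ψ w := by
          simp_rw [hP, Finset.sum_mul]
      _ = ∑ j', ∑ w, φ a j' z * ((starRingEnd ℂ) (φ a j' w) * ψ w) := by
          rw [Finset.sum_comm]; simp_rw [mul_assoc]
      _ = ∑ j', φ a j' z * ∑ w, (starRingEnd ℂ) (φ a j' w) * ψ w := by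
          simp_rw [Finset.mul_sum]
  set c : ℂ := ∑ w, (starRingEnd ℂ) (φ a j w) * ψ w with hc
  have single : ∀ z : X, φ a j z ≠ 0 → ψ z = φ a j z * c := by
    intro z hz
    rw [key z]
    apply Finset.sum_eq_single
    · intro j' _ hne
      rw [hdisj a j j' (Ne.symm hne) z hz, zero_mul]
    · intro h; exact absurd (Finset.mem_univ j) h
  have hx := single x hjx
  have hy := single y hjy
  have hcne : c ≠ 0 := fun h => hψx (by rw [hx, h, mul_zero])
  refine ⟨a, j, hjx, hjy, ?_, ?_⟩
  · rw [hx, hy]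
    field_simp
  · intro j' hj'x _
    by_contra hne
    exact hj'x (hdisj a j j' (fun h => hne h.symm) x hjx)
end

section
/- Sensitivity bound for magic ratio Hamiltonians: Let X be a finite index set. For a ∈ {1,…,m} and j in a finite index set J_a, let φ_{a,j} ∈ ℂ^X be unit vectors such that for each a and all j ≠ j', the supports Supp(φ_{a,j}) = {x ∈ X : ⟨x|φ_{a,j}⟩ ≠ 0} and Supp(φ_{a,j'}) are disjoint. Let P_a = Σ_{j ∈ J_a} |φ_{a,j}⟩⟨φ_{a,j}| and H = −Σ_{a=1}^m P_a, and let ψ ∈ ℂ^X satisfy P_a ψ = ψ for every a. Then for all x ≠ y in X with ⟨y|ψ⟩ ≠ 0, |⟨y|H|x⟩ ⟨x|ψ⟩| ≤ m · |⟨y|ψ⟩|; i.e., the sensitivity parameter s = max_{x≠y, ⟨y|ψ⟩≠0} |⟨y|H|x⟩⟨x|ψ⟩| / |⟨y|ψ⟩| satisfies s ≤ m. -/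
/-- Sensitivity bound for magic ratio Hamiltonians: let `H = −Σ_{a=1}^m P_a`,
where each `P_a = Σ_j |φ_{a,j}⟩⟨φ_{a,j}|` is a sum of rank-one projectors
(the `φ_{a,j}` are unit vectors) whose supports are pairwise disjoint over
`j`, and let `ψ` satisfy `P_a ψ = ψ` for every `a`. Then for all `x ≠ y` with
`⟨y|ψ⟩ ≠ 0`, `|⟨y|H|x⟩ ⟨x|ψ⟩| ≤ m · |⟨y|ψ⟩|`. -/
theorem stmt_17 {X : Type*} [Fintype X] (m : ℕ)
    (J : Fin m → Type*) [∀ a, Fintype (J a)]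
    (φ : (a : Fin m) → J a → X → ℂ)
    (hunit : ∀ a : Fin m, ∀ j : J a, ∑ x, ‖φ a j x‖ ^ 2 = 1)
    (hdisj : ∀ a : Fin m, ∀ j j' : J a, j ≠ j' →
      ∀ x : X, φ a j x ≠ 0 → φ a j' x = 0)
    (P : Fin m → Matrix X X ℂ)
    (hP : ∀ a x y, P a x y = ∑ j, φ a j x * (starRingEnd ℂ) (φ a j y))
    (H : Matrix X X ℂ) (hH : H = -∑ a, P a)
    (ψ : X → ℂ) (hψ : ∀ a, (P a).mulVec ψ = ψ) :
    ∀ x y : X, x ≠ y → ψ y ≠ 0 → ‖H y x * ψ x‖ ≤ (m : ℝ) * ‖ψ y‖ := by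
  intro x y _ _
  -- ψ expanded via P a ψ = ψ
  have hpsi : ∀ a : Fin m, ∀ w : X,
      ψ w = ∑ j, φ a j w * ∑ z, (starRingEnd ℂ) (φ a j z) * ψ z := by
    intro a w
    conv_lhs => rw [← hψ a]
    simp only [Matrix.mulVec, dotProduct, hP, Finset.sum_mul,
      Finset.mul_sum, mul_assoc]
    rw [Finset.sum_comm]
  have key : ∀ a : Fin m, ‖P a y x * ψ x‖ ≤ ‖ψ y‖ := by
    intro a
    by_cases hy : ∃ j0, φ a j0 y ≠ 0
    · obtain ⟨j0, hj0⟩ := hy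
      have hPyx : P a y x = φ a j0 y * (starRingEnd ℂ) (φ a j0 x) := by
        rw [hP, Finset.sum_eq_single j0]
        · intro j _ hj
          rw [hdisj a j0 j (Ne.symm hj) y hj0]; ring
        · intro h; exact absurd (Finset.mem_univ j0) h
      have hψy : ψ y = φ a j0 y * ∑ z, (starRingEnd ℂ) (φ a j0 z) * ψ z := by
        rw [hpsi a y, Finset.sum_eq_single j0]
        · intro j _ hj
          rw [hdisj a j0 j (Ne.symm hj) y hj0]; ring
        · intro h; exact absurd (Finset.mem_univ j0) h
      by_cases hx : φ a j0 x = 0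
      · rw [hPyx, hx]
        simp [norm_nonneg]
      · have hψx : ψ x = φ a j0 x * ∑ z, (starRingEnd ℂ) (φ a j0 z) * ψ z := by
          rw [hpsi a x, Finset.sum_eq_single j0]
          · intro j _ hj
            rw [hdisj a j0 j (Ne.symm hj) x hx]; ring
          · intro h; exact absurd (Finset.mem_univ j0) h
        have h1 : ‖φ a j0 x‖ ^ 2 ≤ 1 := by
          calc ‖φ a j0 x‖ ^ 2 ≤ ∑ z, ‖φ a j0 z‖ ^ 2 :=
                Finset.single_le_sum (f := fun z => ‖φ a j0 z‖ ^ 2) (fun i _ => sq_nonneg _) (Finset.mem_univ x)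
            _ = 1 := hunit a j0
        rw [hPyx, hψx, hψy]
        rw [show φ a j0 y * (starRingEnd ℂ) (φ a j0 x) *
            (φ a j0 x * ∑ z, (starRingEnd ℂ) (φ a j0 z) * ψ z) =
            (starRingEnd ℂ) (φ a j0 x) * φ a j0 x *
            (φ a j0 y * ∑ z, (starRingEnd ℂ) (φ a j0 z) * ψ z) by ring]
        rw [norm_mul, norm_mul, RCLike.norm_conj]
        have h2 : (0:ℝ) ≤ ‖φ a j0 y * ∑ z, (starRingEnd ℂ) (φ a j0 z) * ψ z‖ :=
          norm_nonneg _
        have h3 : ‖φ a j0 x‖ * ‖φ a j0 x‖ ≤ 1 := by nlinarith [norm_nonneg (φ a j0 x)]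
        nlinarith
    · push_neg at hy
      have hz : P a y x = 0 := by
        rw [hP]
        exact Finset.sum_eq_zero fun j _ => by rw [hy j]; ring
      rw [hz, zero_mul, norm_zero]
      exact norm_nonneg _
  rw [hH]
  have hHyx : (-∑ a, P a) y x * ψ x = -∑ a, P a y x * ψ x := by
    simp [Matrix.neg_apply, Matrix.sum_apply, Finset.sum_mul]
  rw [hHyx, norm_neg]
  calc ‖∑ a, P a y x * ψ x‖ ≤ ∑ a, ‖P a y x * ψ x‖ := norm_sum_le _ _
    _ ≤ ∑ _a : Fin m, ‖ψ y‖ := Finset.sum_le_sum fun a _ => key a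
    _ = (m : ℝ) * ‖ψ y‖ := by
        simp [Finset.sum_const, nsmul_eq_mul]
end
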